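/- If for every x₀ ∈ ℝⁿ with x₀ ≥ 0 and every nonnegative integrable control u the output y(t) = C exp(tA)x₀ + C∫₀ᵗ exp((t−s)A)Bu(s) ds is nonnegative for all t ≥ 0, then C exp(tA) is entrywise nonnegative for all t ≥ 0 and C exp(tA) B is entrywise nonnegative for all t ≥ 0. -/

import Mathlib

open Matrix MeasureTheory

theorem expCont {n : ℕ} (A : Matrix (Fin n) (Fin n) ℝ) :
    Continuous (fun t : ℝ => NormedSpace.exp (t • A)) := by
  letI : NormedRing (Matrix (Fin n) (Fin n) ℝ) := Matrix.linftyOpNormedRing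
  letI : NormedAlgebra ℝ (Matrix (Fin n) (Fin n) ℝ) := Matrix.linftyOpNormedAlgebra
  letI : NormedAlgebra ℚ (Matrix (Fin n) (Fin n) ℝ) := NormedAlgebra.restrictScalars ℚ ℝ _
  exact NormedSpace.exp_continuous.comp (continuous_id.smul continuous_const)

/-- Necessity part of the characterization of externally/eventually positive systems: if
the output `y(t) = C exp(tA) x₀ + ∫₀ᵗ C exp((t−s)A) B u(s) ds` is nonnegative for every
nonnegative initial condition and every continuous nonnegative control, then
`C exp(tA) ≥ 0` and `C exp(tA) B ≥ 0` entrywise for all `t ≥ 0`. -/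
theorem stmt_12 {n m k : ℕ} (A : Matrix (Fin n) (Fin n) ℝ)
    (B : Matrix (Fin n) (Fin m) ℝ) (C : Matrix (Fin k) (Fin n) ℝ)
    (hpos : ∀ (x₀ : Fin n → ℝ), (∀ i, 0 ≤ x₀ i) →
      ∀ (u : ℝ → Fin m → ℝ), Continuous (fun s => u s) → (∀ s i, 0 ≤ u s i) →
      ∀ t : ℝ, 0 ≤ t → ∀ i : Fin k,
        0 ≤ (C.mulVec ((NormedSpace.exp (t • A)).mulVec x₀)) i +
          ∫ s in (0:ℝ)..t, ((C * NormedSpace.exp ((t - s) • A) * B).mulVec (u s)) i) :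
    (∀ t : ℝ, 0 ≤ t → ∀ i j, 0 ≤ (C * NormedSpace.exp (t • A)) i j) ∧
    (∀ t : ℝ, 0 ≤ t → ∀ i j, 0 ≤ (C * NormedSpace.exp (t • A) * B) i j) := by
  constructor
  · intro t ht i j
    have := hpos (Pi.single j 1) (by intro i'; by_cases h : i' = j <;> simp [Pi.single_apply, h])
      (fun _ => 0) continuous_const (by intro s i'; simp) t ht i
    simpa [Matrix.mulVec_mulVec, Matrix.mul_apply, Matrix.mulVec, dotProduct, Pi.single_apply] using this
  · intro t₀ ht₀ i j
    by_contra hneg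
    push_neg at hneg
    set h : ℝ → ℝ := fun σ => (C * NormedSpace.exp (σ • A) * B) i j with hh
    have hcont : Continuous h :=
      ((continuous_const.matrix_mul (expCont A)).matrix_mul continuous_const).matrix_elem i j
    have hopen : IsOpen {σ : ℝ | h σ < 0} := isOpen_lt hcont continuous_const
    obtain ⟨δ, hδ, hball⟩ := Metric.isOpen_iff.1 hopen t₀ hneg
    set t : ℝ := t₀ + δ/2 with htdef
    have ht : 0 ≤ t := by positivity
    set φ : ℝ → ℝ := fun s => max 0 (min s (δ/2 - s)) with hφ
    have hφcont : Continuous φ :=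
      continuous_const.max (continuous_id.min (continuous_const.sub continuous_id))
    have hφnn : ∀ s, 0 ≤ φ s := fun s => le_max_left _ _
    have hφzero : ∀ s, δ/2 ≤ s → φ s = 0 := by
      intro s hs
      simp only [hφ, max_eq_left_iff]
      exact (min_le_right _ _).trans (by linarith)
    set u : ℝ → Fin m → ℝ := fun s => φ s • (Pi.single j 1 : Fin m → ℝ) with hu
    have hucont : Continuous (fun s => u s) := hφcont.smul continuous_const
    have hunn : ∀ s i', 0 ≤ u s i' := by
      intro s i'
      simp only [hu, Pi.smul_apply, smul_eq_mul]
      by_cases hij : i' = j <;> simp [Pi.single_apply, hij, hφnn s]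
    have key := hpos 0 (fun _ => le_refl 0) u hucont hunn t ht i
    rw [Matrix.mulVec_zero, Matrix.mulVec_zero] at key
    simp only [Pi.zero_apply, zero_add] at key
    -- rewrite integrand
    have hintegrand : ∀ s, ((C * NormedSpace.exp ((t - s) • A) * B).mulVec (u s)) i
        = φ s * h (t - s) := by
      intro s
      simp [hu, Matrix.mulVec_smul, hh]
    rw [intervalIntegral.integral_congr (fun s _ => hintegrand s)] at key
    set g : ℝ → ℝ := fun s => φ s * h (t - s) with hg
    have hgcont : Continuous g := hφcont.mul (hcont.comp (continuous_const.sub continuous_id))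
    have hδ2t : δ/2 ≤ t := by linarith
    have hsplit : ∫ s in (0:ℝ)..t, g s
        = (∫ s in (0:ℝ)..(δ/2), g s) + ∫ s in (δ/2)..t, g s :=
      (intervalIntegral.integral_add_adjacent_intervals
        (hgcont.intervalIntegrable _ _) (hgcont.intervalIntegrable _ _)).symm
    have hsecond : (∫ s in (δ/2)..t, g s) = 0 := by
      rw [intervalIntegral.integral_congr (g := fun _ => (0:ℝ)) ?_, intervalIntegral.integral_zero]
      intro s hs
      rw [Set.uIcc_of_le hδ2t] at hs
      simp [hg, hφzero s hs.1]
    have hfirst : (∫ s in (0:ℝ)..(δ/2), g s) < 0 := by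
      have hposint : 0 < ∫ s in (0:ℝ)..(δ/2), -g s := by
        apply intervalIntegral.intervalIntegral_pos_of_pos_on
          (hgcont.neg.intervalIntegrable _ _)
        · intro x hx
          have hφx : 0 < φ x := by
            simp only [hφ]
            rw [lt_max_iff]
            right
            exact lt_min hx.1 (by linarith [hx.2])
          have hhx : h (t - x) < 0 := by
            apply hball
            simp only [Metric.mem_ball, Real.dist_eq, htdef]
            rw [abs_lt]
            constructor <;> [linarith [hx.2]; linarith [hx.1]]
          simp only [hg, Pi.neg_apply, neg_mul_eq_mul_neg] -- -(φ x * h (t-x))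
          nlinarith
        · linarith
      rw [intervalIntegral.integral_neg] at hposint
      linarith
    rw [hsplit, hsecond, add_zero] at key
    linarith
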